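/- Krull–Remak–Schmidt–Azumaya uniqueness of interval decompositions: let T ⊆ ℝ and let V be a persistence module over T admitting two decompositions into interval modules, V ≅ ⊕_{ℓ∈L} I^{J_ℓ} and V ≅ ⊕_{m∈M} I^{K_m}. Then there is a bijection σ : L → M such that J_ℓ = K_{σ(ℓ)} for all ℓ ∈ L. -/

import Mathlib

attribute [local instance] Classical.propDecidable

structure PersMod (k : Type) [Field k] (T : Type) [Preorder T] where
  space : T → Type
  [addCommGroup : ∀ t, AddCommGroup (space t)]
  [module : ∀ t, Module k (space t)]
  map : ∀ s t : T, s ≤ t → space s →ₗ[k] space t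
  map_id : ∀ t, map t t le_rfl = LinearMap.id
  map_comp : ∀ r s t (h1 : r ≤ s) (h2 : s ≤ t),
    (map s t h2).comp (map r s h1) = map r t (h1.trans h2)

attribute [instance] PersMod.addCommGroup PersMod.module

def PersIso {k : Type} [Field k] {T : Type} [Preorder T] (U V : PersMod k T) : Prop :=
  ∃ e : ∀ t, U.space t ≃ₗ[k] V.space t,
    ∀ s t (h : s ≤ t),
      (e t).toLinearMap.comp (U.map s t h) = (V.map s t h).comp (e s).toLinearMap

def IsIntervalSet {T : Type} [Preorder T] (J : Set T) : Prop :=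
  J.Nonempty ∧ ∀ ⦃r s t : T⦄, r ∈ J → t ∈ J → r ≤ s → s ≤ t → s ∈ J

noncomputable def intervalModule (k : Type) [Field k] (T : Type) [Preorder T]
    (J : Set T) (hJ : IsIntervalSet J) : PersMod k T where
  space t := PLift (t ∈ J) → k
  addCommGroup := fun _ => inferInstance
  module := fun _ => inferInstance
  map s t _ :=
    { toFun := fun f _ => if hs : s ∈ J then f ⟨hs⟩ else 0
      map_add' := fun f g => by
        funext ht; by_cases hs : s ∈ J <;> simp [hs]
      map_smul' := fun c f => by
        funext ht; by_cases hs : s ∈ J <;> simp [hs] }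
  map_id t := by
    refine LinearMap.ext fun f => funext fun ht => ?_
    show (if hs : t ∈ J then f ⟨hs⟩ else 0) = f ht
    rw [dif_pos ht.down]
  map_comp r s t h1 h2 := by
    refine LinearMap.ext fun f => funext fun ht => ?_
    show (if hs : s ∈ J then (if hr : r ∈ J then f ⟨hr⟩ else 0) else 0)
        = (if hr : r ∈ J then f ⟨hr⟩ else 0)
    by_cases hr : r ∈ J
    · have hs : s ∈ J := hJ.2 hr ht.down h1 h2
      simp [hr, hs]
    · by_cases hs : s ∈ J <;> simp [hr, hs]

noncomputable def dsum {k : Type} [Field k] {T : Type} [Preorder T] {L : Type}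
    (V : L → PersMod k T) : PersMod k T where
  space t := DFinsupp (fun ℓ => (V ℓ).space t)
  addCommGroup := fun _ => inferInstance
  module := fun _ => inferInstance
  map s t h := DFinsupp.mapRange.linearMap (fun ℓ => (V ℓ).map s t h)
  map_id t := by
    show DFinsupp.mapRange.linearMap (fun ℓ => (V ℓ).map t t le_rfl) = LinearMap.id
    have : (fun ℓ => (V ℓ).map t t le_rfl)
        = fun ℓ => (LinearMap.id : (V ℓ).space t →ₗ[k] (V ℓ).space t) :=
      funext fun ℓ => (V ℓ).map_id t
    rw [this]
    exact DFinsupp.mapRange.linearMap_id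
  map_comp r s t h1 h2 := by
    show (DFinsupp.mapRange.linearMap (fun ℓ => (V ℓ).map s t h2)).comp
        (DFinsupp.mapRange.linearMap (fun ℓ => (V ℓ).map r s h1))
      = DFinsupp.mapRange.linearMap (fun ℓ => (V ℓ).map r t (h1.trans h2))
    rw [← DFinsupp.mapRange.linearMap_comp]
    congr 1
    funext ℓ
    exact (V ℓ).map_comp r s t h1 h2

open scoped ENNReal

section Dim

noncomputable def edim (k : Type) [Field k] (M : Type) [AddCommGroup M] [Module k M] : ℕ∞ :=
  Cardinal.toENat (Module.rank k M)

noncomputable def erank {k : Type} [Field k] {M N : Type} [AddCommGroup M] [Module k M]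
    [AddCommGroup N] [Module k N] (f : M →ₗ[k] N) : ℕ∞ :=
  edim k (LinearMap.range f)

noncomputable def ecard (S : Type) : ℕ∞ := Cardinal.toENat (Cardinal.mk S)

end Dim

section Matchings

noncomputable def eDiff (x y : EReal) : ℝ≥0∞ :=
  if x = y then 0
  else if x = ⊤ ∨ x = ⊥ ∨ y = ⊤ ∨ y = ⊥ then ⊤
  else ENNReal.ofReal |x.toReal - y.toReal|

noncomputable def dPt (α β : EReal × EReal) : ℝ≥0∞ :=
  max (eDiff α.1 β.1) (eDiff α.2 β.2)

noncomputable def diagDist (α : EReal × EReal) : ℝ≥0∞ :=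
  if α.1 = ⊥ ∨ α.2 = ⊤ then ⊤ else ENNReal.ofReal ((α.2.toReal - α.1.toReal) / 2)

def IsMatching {α β : Type} (M : Set (α × β)) : Prop :=
  (∀ a b b', (a, b) ∈ M → (a, b') ∈ M → b = b') ∧
  (∀ a a' b, (a, b) ∈ M → (a', b) ∈ M → a = a')

def IsDeltaMatching {α β : Type} (A : α → EReal × EReal) (B : β → EReal × EReal)
    (δ : ℝ≥0∞) : Prop :=
  ∃ M : Set (α × β), IsMatching M ∧
    (∀ p ∈ M, dPt (A p.1) (B p.2) ≤ δ) ∧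
    (∀ a, (∀ b, (a, b) ∉ M) → diagDist (A a) ≤ δ) ∧
    (∀ b, (∀ a, (a, b) ∉ M) → diagDist (B b) ≤ δ)

noncomputable def dBottle {α β : Type} (A : α → EReal × EReal) (B : β → EReal × EReal) : ℝ≥0∞ :=
  sInf {d : ℝ≥0∞ | ∃ δ : ℝ, 0 ≤ δ ∧ IsDeltaMatching A B (ENNReal.ofReal δ) ∧ d = ENNReal.ofReal δ}

end Matchings

section Measure

noncomputable def persIm {k : Type} [Field k] (V : PersMod k ℝ) (a : EReal) (c : ℝ) :
    Submodule k (V.space c) :=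
  if h : ∃ a' : ℝ, a = (a' : EReal) ∧ a' ≤ c then
    LinearMap.range (V.map h.choose c h.choose_spec.2)
  else ⊥

noncomputable def persKer {k : Type} [Field k] (V : PersMod k ℝ) (c : ℝ) (d : EReal) :
    Submodule k (V.space c) :=
  if h : ∃ d' : ℝ, d = (d' : EReal) ∧ c ≤ d' then
    LinearMap.ker (V.map c h.choose h.choose_spec.2)
  else ⊤

noncomputable def persMeasure {k : Type} [Field k] (V : PersMod k ℝ)
    (a : EReal) (b c : ℝ) (d : EReal) : ℕ∞ :=
  edim k
    (↥(persIm V (b : EReal) c ⊓ persKer V c d) ⧸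
      Submodule.comap (persIm V (b : EReal) c ⊓ persKer V c d).subtype
        (persIm V a c ⊓ persKer V c d))

end Measure

section Interleaving

def Interleaved (k : Type) [Field k] (U V : PersMod k ℝ) (δ : ℝ) : Prop :=
  ∃ (φ : ∀ t : ℝ, U.space t →ₗ[k] V.space (t + δ))
    (ψ : ∀ t : ℝ, V.space t →ₗ[k] U.space (t + δ)),
    (∀ s t (h : s ≤ t),
      (φ t).comp (U.map s t h) = (V.map (s + δ) (t + δ) (by linarith)).comp (φ s)) ∧
    (∀ s t (h : s ≤ t),
      (ψ t).comp (V.map s t h) = (U.map (s + δ) (t + δ) (by linarith)).comp (ψ s)) ∧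
    (∀ t (h : t ≤ t + δ + δ), (ψ (t + δ)).comp (φ t) = U.map t (t + δ + δ) h) ∧
    (∀ t (h : t ≤ t + δ + δ), (φ (t + δ)).comp (ψ t) = V.map t (t + δ + δ) h)

noncomputable def dInter (k : Type) [Field k] (U V : PersMod k ℝ) : ℝ≥0∞ :=
  sInf {d : ℝ≥0∞ | ∃ δ : ℝ, 0 ≤ δ ∧ Interleaved k U V δ ∧ d = ENNReal.ofReal δ}

def QTame (k : Type) [Field k] (V : PersMod k ℝ) : Prop :=
  ∀ s t : ℝ, ∀ h : s < t, erank (V.map s t h.le) ≠ ⊤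

def LocFinitePM (k : Type) [Field k] (W : PersMod k ℝ) : Prop :=
  ∃ (L : Type) (J : L → Set ℝ) (hJ : ∀ ℓ, IsIntervalSet (J ℓ)),
    PersIso W (dsum fun ℓ => intervalModule k ℝ (J ℓ) (hJ ℓ)) ∧
    ∀ S : Set ℝ, Bornology.IsBounded S → {ℓ : L | (J ℓ ∩ S).Nonempty}.Finite

noncomputable def zeroPers (k : Type) [Field k] : PersMod k ℝ where
  space _ := PUnit
  addCommGroup := fun _ => inferInstance
  module := fun _ => inferInstance
  map _ _ _ := 0
  map_id t := LinearMap.ext fun x => Subsingleton.elim _ _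
  map_comp r s t h1 h2 := LinearMap.ext fun x => Subsingleton.elim _ _

noncomputable def smoothing {k : Type} [Field k] (V : PersMod k ℝ) (ε : ℝ) (hε : 0 < ε) :
    PersMod k ℝ where
  space t := LinearMap.range (V.map (t - ε) (t + ε) (by linarith))
  addCommGroup := fun _ => inferInstance
  module := fun _ => inferInstance
  map s t h := LinearMap.restrict (V.map (s + ε) (t + ε) (by linarith))
    (p := LinearMap.range (V.map (s - ε) (s + ε) (by linarith)))
    (q := LinearMap.range (V.map (t - ε) (t + ε) (by linarith)))
    (by
      rintro x ⟨y, rfl⟩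
      refine ⟨V.map (s - ε) (t - ε) (by linarith) y, ?_⟩
      have h1 := LinearMap.congr_fun
        (V.map_comp (s - ε) (t - ε) (t + ε) (by linarith) (by linarith)) y
      have h2 := LinearMap.congr_fun
        (V.map_comp (s - ε) (s + ε) (t + ε) (by linarith) (by linarith)) y
      simp only [LinearMap.comp_apply] at h1 h2
      rw [h1, h2])
  map_id t := by
    refine LinearMap.ext fun x => Subtype.ext ?_
    have := LinearMap.congr_fun (V.map_id (t + ε)) x.1
    simpa [LinearMap.restrict_apply] using this
  map_comp r s t h1 h2 := by
    refine LinearMap.ext fun x => Subtype.ext ?_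
    have := LinearMap.congr_fun
      (V.map_comp (r + ε) (s + ε) (t + ε) (by linarith) (by linarith)) x.1
    simpa [LinearMap.restrict_apply] using this

end Interleaving

section Webb

def webbSubmodule (k : Type) [Field k] (t : ℤ) : Submodule k (ℕ → k) where
  carrier := {x | ∀ i : ℕ, (i : ℤ) < -t → x i = 0}
  add_mem' := by
    intro x y hx hy i hi
    simp [Pi.add_apply, hx i hi, hy i hi]
  zero_mem' := by
    intro i hi
    rfl
  smul_mem' := by
    intro c x hx i hi
    simp [Pi.smul_apply, hx i hi]

noncomputable def webbModule (k : Type) [Field k] : PersMod k ↥{n : ℤ | n ≤ 0} where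
  space t := ↥(webbSubmodule k t.1)
  addCommGroup := fun _ => inferInstance
  module := fun _ => inferInstance
  map s t h := Submodule.inclusion (by
    intro x hx
    have hx' : ∀ i : ℕ, (i : ℤ) < -s.1 → x i = 0 := hx
    intro i hi
    exact hx' i (lt_of_lt_of_le hi (neg_le_neg h)))
  map_id t := LinearMap.ext fun x => rfl
  map_comp r s t h1 h2 := LinearMap.ext fun x => rfl

end Webb

section Decorated

/-- `decMem t x` : the real number `t` belongs to the interval described by the
decorated pair `x = ((p, εp), (q, εq))`, where the decoration `false` means `⁻`
and `true` means `⁺`. -/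
def decMem (t : ℝ) (x : (EReal × Bool) × (EReal × Bool)) : Prop :=
  (x.1.1 < (t : EReal) ∨ (x.1.1 = (t : EReal) ∧ x.1.2 = false)) ∧
  ((t : EReal) < x.2.1 ∨ ((t : EReal) = x.2.1 ∧ x.2.2 = true))

/-- A valid decorated pair: the left coordinate is `p⁻`/`p⁺` for a real `p` or `−∞⁺`,
the right coordinate is `q⁻`/`q⁺` for a real `q` or `+∞⁻`, and the corresponding
interval is nonempty (i.e. `p* < q*`). -/
def ValidDec (x : (EReal × Bool) × (EReal × Bool)) : Prop :=
  (x.1.1 = ⊥ → x.1.2 = true) ∧ x.1.1 ≠ ⊤ ∧ (x.2.1 = ⊤ → x.2.2 = false) ∧ x.2.1 ≠ ⊥ ∧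
  {t : ℝ | decMem t x}.Nonempty

/-- The decorated pair `x` belongs to the rectangle `[a,b] × [c,d]`, i.e.
`[b,c] ⊆ ⟨p*,q*⟩ ⊆ (a,d)`. -/
def decInRect (x : (EReal × Bool) × (EReal × Bool)) (a : EReal) (b c : ℝ) (d : EReal) : Prop :=
  (∀ t ∈ Set.Icc b c, decMem t x) ∧
  (∀ t : ℝ, decMem t x → a < (t : EReal) ∧ (t : EReal) < d)

/-- `Dgm` is (a labelling of) the decorated persistence diagram of `V`. -/
def IsDgmOf {k : Type} [Field k] (V : PersMod k ℝ) {ι : Type}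
    (Dgm : ι → (EReal × Bool) × (EReal × Bool)) : Prop :=
  (∀ i, ValidDec (Dgm i)) ∧
  ∀ (a : EReal) (b c : ℝ) (d : EReal), a < (b : EReal) → b ≤ c → (c : EReal) < d →
    persMeasure V a b c d = ecard {i : ι // decInRect (Dgm i) a b c d}

end Decorated

section RMeasure

/-- `[a,b] × [c,d]` is a (nondegenerate) rectangle contained in `D`. -/
def RectIn (D : Set (ℝ × ℝ)) (a b c d : ℝ) : Prop :=
  a < b ∧ c < d ∧ Set.Icc a b ×ˢ Set.Icc c d ⊆ D

/-- An r-measure on `D`: additivity under horizontal and vertical splitting. -/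
def IsRMeasure (D : Set (ℝ × ℝ)) (μ : ℝ → ℝ → ℝ → ℝ → ℕ∞) : Prop :=
  (∀ a p b c d, a < p → p < b → RectIn D a b c d → μ a b c d = μ a p c d + μ p b c d) ∧
  (∀ a b c q d, c < q → q < d → RectIn D a b c d → μ a b c d = μ a b c q + μ a b q d)

/-- Membership of a decorated point of the plane (`Bool` decoration: `true` = `⁺`,
`false` = `⁻`) in the closed rectangle `[a,b] × [c,d]`. -/
def dptMem (x : (ℝ × Bool) × (ℝ × Bool)) (a b c d : ℝ) : Prop :=
  a ≤ x.1.1 ∧ x.1.1 ≤ b ∧ c ≤ x.2.1 ∧ x.2.1 ≤ d ∧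
  (x.1.1 = a → x.1.2 = true) ∧ (x.1.1 = b → x.1.2 = false) ∧
  (x.2.1 = c → x.2.2 = true) ∧ (x.2.1 = d → x.2.2 = false)

/-- The r-interior `D•` of `D`: decorated points contained in some rectangle of `D`. -/
def rInt (D : Set (ℝ × ℝ)) : Set ((ℝ × Bool) × (ℝ × Bool)) :=
  {x | ∃ a b c d, RectIn D a b c d ∧ dptMem x a b c d}

/-- The number of decorated points, counted with multiplicity `m`, lying in the
rectangle `[a,b] × [c,d]`. -/
noncomputable def dcount (m : (ℝ × Bool) × (ℝ × Bool) → ℕ) (a b c d : ℝ) : ℕ∞ :=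
  ecard (Σ x : {x : (ℝ × Bool) × (ℝ × Bool) // dptMem x a b c d}, Fin (m x.1))

end RMeasure

section KRS

open Submodule

variable {k : Type} [Field k]

noncomputable def persA' {T : Type} [Preorder T] (V : PersMod k T) (J₀ : Set T) (t₀ : T) :
    Submodule k (V.space t₀) :=
  (⨅ s : {s : T // s ∈ J₀ ∧ s ≤ t₀}, LinearMap.range (V.map s.1 t₀ s.2.2)) ⊓
  (⨅ u : {u : T // u ∉ J₀ ∧ t₀ ≤ u}, LinearMap.ker (V.map t₀ u.1 u.2.2))

noncomputable def persB' {T : Type} [Preorder T] (V : PersMod k T) (J₀ : Set T) (t₀ : T) :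
    Submodule k (V.space t₀) :=
  (⨆ s : {s : T // s ∉ J₀ ∧ s ≤ t₀}, LinearMap.range (V.map s.1 t₀ s.2.2)) ⊔
  (⨆ u : {u : T // u ∈ J₀ ∧ t₀ ≤ u}, LinearMap.ker (V.map t₀ u.1 u.2.2))

noncomputable def multAt {T : Type} [Preorder T] (V : PersMod k T) (J₀ : Set T) (t₀ : T) :
    Cardinal :=
  Module.rank k
    (↥(persA' V J₀ t₀) ⧸ Submodule.comap (persA' V J₀ t₀).subtype (persB' V J₀ t₀))

section Invariance

variable {T : Type} [Preorder T] {U V : PersMod k T}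
  (e : ∀ t, U.space t ≃ₗ[k] V.space t)
  (he : ∀ s t (h : s ≤ t),
    (e t).toLinearMap.comp (U.map s t h) = (V.map s t h).comp (e s).toLinearMap)

include he

theorem range_map_eq (s t : T) (h : s ≤ t) :
    Submodule.map (e t).toLinearMap (LinearMap.range (U.map s t h))
      = LinearMap.range (V.map s t h) := by
  rw [← LinearMap.range_comp, he s t h, LinearMap.range_comp, LinearEquiv.range,
    Submodule.map_top]

theorem ker_map_eq (t u : T) (h : t ≤ u) :
    Submodule.map (e t).toLinearMap (LinearMap.ker (U.map t u h))
      = LinearMap.ker (V.map t u h) := by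
  have h1 : LinearMap.ker (U.map t u h)
      = LinearMap.ker ((e u).toLinearMap.comp (U.map t u h)) := by
    rw [LinearMap.ker_comp, LinearEquiv.ker, Submodule.comap_bot]
  rw [h1, he t u h, LinearMap.ker_comp]
  exact Submodule.map_comap_eq_of_surjective (e t).surjective _

theorem persA'_map (J₀ : Set T) (t₀ : T) :
    Submodule.map (e t₀).toLinearMap (persA' U J₀ t₀) = persA' V J₀ t₀ := by
  unfold persA'
  rw [Submodule.map_inf (e t₀).toLinearMap (e t₀).injective]
  congr 1
  · rw [Submodule.map_equiv_eq_comap_symm, Submodule.comap_iInf]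
    exact iInf_congr fun s => by
      rw [← Submodule.map_equiv_eq_comap_symm]; exact range_map_eq e he s.1 t₀ s.2.2
  · rw [Submodule.map_equiv_eq_comap_symm, Submodule.comap_iInf]
    exact iInf_congr fun u => by
      rw [← Submodule.map_equiv_eq_comap_symm]; exact ker_map_eq e he t₀ u.1 u.2.2

theorem persB'_map (J₀ : Set T) (t₀ : T) :
    Submodule.map (e t₀).toLinearMap (persB' U J₀ t₀) = persB' V J₀ t₀ := by
  unfold persB'
  rw [Submodule.map_sup, Submodule.map_iSup, Submodule.map_iSup]
  congr 1
  · exact iSup_congr fun s => range_map_eq e he s.1 t₀ s.2.2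
  · exact iSup_congr fun u => ker_map_eq e he t₀ u.1 u.2.2

end Invariance

theorem multAt_congr {T : Type} [Preorder T] {U V : PersMod k T} (h : PersIso U V)
    (J₀ : Set T) (t₀ : T) : multAt U J₀ t₀ = multAt V J₀ t₀ := by
  obtain ⟨e, he⟩ := h
  have hA := persA'_map e he J₀ t₀
  have hB := persB'_map e he J₀ t₀
  unfold multAt
  refine LinearEquiv.rank_eq (Submodule.Quotient.equiv _ _
    (((e t₀).submoduleMap (persA' U J₀ t₀)).trans (LinearEquiv.ofEq _ _ hA)) ?_)
  ext x
  simp only [Submodule.mem_map, Submodule.mem_comap, Submodule.coe_subtype]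
  constructor
  · rintro ⟨y, hy, rfl⟩
    have h1 : ((((e t₀).submoduleMap (persA' U J₀ t₀)).trans (LinearEquiv.ofEq _ _ hA)) y :
        V.space t₀) = e t₀ y.1 := rfl
    erw [h1]; rw [← hB]
    exact Submodule.mem_map_of_mem hy
  · intro hx
    have hxA : (x : V.space t₀) ∈ Submodule.map (e t₀).toLinearMap (persA' U J₀ t₀) := by
      rw [hA]; exact x.2
    rw [← hB] at hx
    obtain ⟨b, hbB, hbe⟩ := hx
    obtain ⟨a, haA, hae⟩ := hxA
    have hba : b = a := (e t₀).injective (hbe.trans hae.symm)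
    exact ⟨⟨b, hba ▸ haA⟩, hbB, Subtype.ext hbe⟩

end KRS

section Computation

open Submodule

variable (k : Type) [Field k] {T L : Type} [LinearOrder T]
variable (J : L → Set T) (hJ : ∀ ℓ, IsIntervalSet (J ℓ)) (t₀ : T)

theorem ispace_zero {ℓ : L} (ht : t₀ ∉ J ℓ)
    (x : (intervalModule k T (J ℓ) (hJ ℓ)).space t₀) : x = 0 :=
  funext fun h => absurd h.down ht

theorem ispace_ext {ℓ : L} (ht : t₀ ∈ J ℓ)
    {x y : (intervalModule k T (J ℓ) (hJ ℓ)).space t₀}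
    (h : x ⟨ht⟩ = y ⟨ht⟩) : x = y := by
  funext h'
  have hh : h' = ⟨ht⟩ := Subsingleton.elim _ _
  rw [hh]; exact h

/-- The maps of the direct sum, expressed natively on `Π₀`. -/
noncomputable def Wmap' (s t : T) (h : s ≤ t) :
    (Π₀ ℓ, (intervalModule k T (J ℓ) (hJ ℓ)).space s) →ₗ[k]
      (Π₀ ℓ, (intervalModule k T (J ℓ) (hJ ℓ)).space t) :=
  DFinsupp.mapRange.linearMap fun ℓ => (intervalModule k T (J ℓ) (hJ ℓ)).map s t h

theorem range_W_eq (s t : T) (h : s ≤ t) :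
    LinearMap.range ((dsum fun ℓ => intervalModule k T (J ℓ) (hJ ℓ)).map s t h)
      = LinearMap.range (Wmap' k J hJ s t h) := rfl

theorem ker_W_eq (s t : T) (h : s ≤ t) :
    LinearMap.ker ((dsum fun ℓ => intervalModule k T (J ℓ) (hJ ℓ)).map s t h)
      = LinearMap.ker (Wmap' k J hJ s t h) := rfl

theorem Wmap'_apply (s t : T) (h : s ≤ t)
    (x : Π₀ ℓ, (intervalModule k T (J ℓ) (hJ ℓ)).space s) (ℓ : L) :
    Wmap' k J hJ s t h x ℓ = (intervalModule k T (J ℓ) (hJ ℓ)).map s t h (x ℓ) := rfl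

noncomputable def coordSub (S : Set L) :
    Submodule k (Π₀ ℓ, (intervalModule k T (J ℓ) (hJ ℓ)).space t₀) where
  carrier := {x | ∀ ℓ ∉ S, x ℓ = 0}
  add_mem' := fun hx hy ℓ hℓ => by
    rw [DFinsupp.add_apply, hx ℓ hℓ, hy ℓ hℓ, add_zero]
  zero_mem' := fun ℓ _ => DFinsupp.zero_apply ℓ
  smul_mem' := fun c x hx ℓ hℓ => by
    rw [DFinsupp.smul_apply, hx ℓ hℓ, smul_zero]

theorem mem_coordSub {S : Set L} {x : Π₀ ℓ, (intervalModule k T (J ℓ) (hJ ℓ)).space t₀} :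
    x ∈ coordSub k J hJ t₀ S ↔ ∀ ℓ ∉ S, x ℓ = 0 := Iff.rfl

theorem coordSub_mono {S S' : Set L} (h : S ⊆ S') :
    coordSub k J hJ t₀ S ≤ coordSub k J hJ t₀ S' :=
  fun _x hx ℓ hℓ => hx ℓ fun hm => hℓ (h hm)

theorem coordSub_inf (S S' : Set L) :
    coordSub k J hJ t₀ S ⊓ coordSub k J hJ t₀ S' = coordSub k J hJ t₀ (S ∩ S') := by
  ext x
  simp only [Submodule.mem_inf, mem_coordSub]
  constructor
  · rintro ⟨h1, h2⟩ ℓ hℓ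
    by_cases h : ℓ ∈ S
    · exact h2 ℓ fun hS' => hℓ ⟨h, hS'⟩
    · exact h1 ℓ h
  · intro hx
    exact ⟨fun ℓ hℓ => hx ℓ fun hm => hℓ hm.1, fun ℓ hℓ => hx ℓ fun hm => hℓ hm.2⟩

theorem coordSub_iInf {ι : Sort*} (S : ι → Set L) :
    (⨅ i, coordSub k J hJ t₀ (S i)) = coordSub k J hJ t₀ (⋂ i, S i) := by
  ext x
  simp only [Submodule.mem_iInf, mem_coordSub]
  constructor
  · intro h ℓ hℓ
    rw [Set.mem_iInter] at hℓ
    push_neg at hℓ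
    obtain ⟨i, hi⟩ := hℓ
    exact h i ℓ hi
  · intro h i ℓ hℓ
    exact h ℓ fun hm => hℓ (Set.mem_iInter.mp hm i)

theorem single_mem_coordSub {S : Set L} {ℓ : L} (hℓ : ℓ ∈ S)
    (v : (intervalModule k T (J ℓ) (hJ ℓ)).space t₀) :
    DFinsupp.single ℓ v ∈ coordSub k J hJ t₀ S :=
  fun _ℓ' hℓ' => DFinsupp.single_eq_of_ne fun heq => hℓ' (heq ▸ hℓ)

theorem coordSub_iSup {ι : Sort*} (S : ι → Set L) :
    (⨆ i, coordSub k J hJ t₀ (S i)) = coordSub k J hJ t₀ (⋃ i, S i) := by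
  refine le_antisymm (iSup_le fun i => coordSub_mono k J hJ t₀ (Set.subset_iUnion S i)) ?_
  intro x
  induction x using DFinsupp.induction with
  | h0 => intro _; exact zero_mem _
  | ha ℓ b f hf hb ih =>
    intro hx
    have hf' : f ∈ coordSub k J hJ t₀ (⋃ i, S i) := by
      intro ℓ' hℓ'
      have h0 := hx ℓ' hℓ'
      rw [DFinsupp.add_apply] at h0
      by_cases h : ℓ' = ℓ
      · subst h; exact hf
      · rwa [DFinsupp.single_eq_of_ne h, zero_add] at h0
    have hℓU : ℓ ∈ ⋃ i, S i := by
      by_contra hc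
      have h0 := hx ℓ hc
      rw [DFinsupp.add_apply, DFinsupp.single_eq_same, hf, add_zero] at h0
      exact hb h0
    obtain ⟨i, hi⟩ := Set.mem_iUnion.mp hℓU
    exact add_mem
      (le_iSup (fun i => coordSub k J hJ t₀ (S i)) i (single_mem_coordSub k J hJ t₀ hi b))
      (ih hf')

theorem coordSub_sup (S S' : Set L) :
    coordSub k J hJ t₀ S ⊔ coordSub k J hJ t₀ S' = coordSub k J hJ t₀ (S ∪ S') := by
  have h1 : S ∪ S' = ⋃ b : Bool, (cond b S S') := by
    ext y
    simp only [Set.mem_union, Set.mem_iUnion, Bool.exists_bool]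
    exact ⟨fun h => h.symm, fun h => h.symm⟩
  rw [h1, ← coordSub_iSup, iSup_bool_eq]
  rfl

theorem range_Wmap' (s : T) (h : s ≤ t₀) :
    LinearMap.range (Wmap' k J hJ s t₀ h) = coordSub k J hJ t₀ {ℓ | s ∈ J ℓ} := by
  ext x
  simp only [LinearMap.mem_range, mem_coordSub]
  constructor
  · rintro ⟨y, rfl⟩ ℓ hℓ
    rw [Wmap'_apply]
    funext h'
    exact dif_neg hℓ
  · intro hx
    refine ⟨DFinsupp.mapRange
      (fun ℓ (f : (intervalModule k T (J ℓ) (hJ ℓ)).space t₀) =>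
        (fun _ => if ht : t₀ ∈ J ℓ then f ⟨ht⟩ else 0 :
          (intervalModule k T (J ℓ) (hJ ℓ)).space s))
      (fun ℓ => by
        funext hs
        show (if ht : t₀ ∈ J ℓ then
            (0 : (intervalModule k T (J ℓ) (hJ ℓ)).space t₀) ⟨ht⟩ else 0) = 0
        by_cases ht : t₀ ∈ J ℓ
        · rw [dif_pos ht]
          rfl
        · rw [dif_neg ht]) x, ?_⟩
    refine DFinsupp.ext fun ℓ => ?_
    rw [Wmap'_apply]; erw [DFinsupp.mapRange_apply]
    funext h'
    have ht : t₀ ∈ J ℓ := h'.down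
    show (if hs : s ∈ J ℓ then
        (fun _ => if ht : t₀ ∈ J ℓ then x ℓ ⟨ht⟩ else 0 :
          (intervalModule k T (J ℓ) (hJ ℓ)).space s) ⟨hs⟩ else 0) = x ℓ h'
    by_cases hs : s ∈ J ℓ
    · rw [dif_pos hs]
      show (if ht' : t₀ ∈ J ℓ then x ℓ ⟨ht'⟩ else 0) = x ℓ h'
      rw [dif_pos ht]
    · rw [dif_neg hs, hx ℓ hs]
      rfl

theorem ker_Wmap' (u : T) (h : t₀ ≤ u) :
    LinearMap.ker (Wmap' k J hJ t₀ u h) = coordSub k J hJ t₀ {ℓ | u ∉ J ℓ} := by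
  ext x
  simp only [LinearMap.mem_ker, mem_coordSub]
  constructor
  · intro hx ℓ hℓ
    have hu : u ∈ J ℓ := not_not.mp hℓ
    by_cases ht : t₀ ∈ J ℓ
    · have h1 : Wmap' k J hJ t₀ u h x ℓ = 0 := by rw [hx]; rfl
      rw [Wmap'_apply] at h1
      have h2 := congrFun h1 ⟨hu⟩
      have h2' : (if ht' : t₀ ∈ J ℓ then x ℓ ⟨ht'⟩ else 0) = (0 : k) := h2
      rw [dif_pos ht] at h2'
      exact ispace_ext k J hJ t₀ ht (h2'.trans rfl)
    · exact ispace_zero k J hJ t₀ ht (x ℓ)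
  · intro hx
    refine DFinsupp.ext fun ℓ => ?_
    rw [Wmap'_apply]
    funext hu
    have hu' : u ∈ J ℓ := hu.down
    show (if ht : t₀ ∈ J ℓ then x ℓ ⟨ht⟩ else 0)
      = (0 : Π₀ ℓ, (intervalModule k T (J ℓ) (hJ ℓ)).space u) ℓ hu
    by_cases ht : t₀ ∈ J ℓ
    · rw [dif_pos ht, hx ℓ (not_not.mpr hu')]
      rfl
    · rw [dif_neg ht]
      rfl

def SAset (J₀ : Set T) : Set L :=
  {ℓ | (∀ s, s ∈ J₀ → s ≤ t₀ → s ∈ J ℓ) ∧ ∀ u, u ∉ J₀ → t₀ ≤ u → u ∉ J ℓ}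

def SBset (J₀ : Set T) : Set L :=
  {ℓ | (∃ s, (s ∉ J₀ ∧ s ≤ t₀) ∧ s ∈ J ℓ) ∨ ∃ u, (u ∈ J₀ ∧ t₀ ≤ u) ∧ u ∉ J ℓ}

theorem persA'_dsum (J₀ : Set T) :
    persA' (dsum fun ℓ => intervalModule k T (J ℓ) (hJ ℓ)) J₀ t₀
      = coordSub k J hJ t₀ (SAset J t₀ J₀) := by
  unfold persA'
  have h1 : (⨅ s : {s : T // s ∈ J₀ ∧ s ≤ t₀},
      LinearMap.range ((dsum fun ℓ => intervalModule k T (J ℓ) (hJ ℓ)).map s.1 t₀ s.2.2))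
      = coordSub k J hJ t₀ (⋂ s : {s : T // s ∈ J₀ ∧ s ≤ t₀}, {ℓ | s.1 ∈ J ℓ}) := by
    rw [← coordSub_iInf]
    exact iInf_congr fun s =>
      (range_W_eq k J hJ s.1 t₀ s.2.2).trans (range_Wmap' k J hJ t₀ s.1 s.2.2)
  have h2 : (⨅ u : {u : T // u ∉ J₀ ∧ t₀ ≤ u},
      LinearMap.ker ((dsum fun ℓ => intervalModule k T (J ℓ) (hJ ℓ)).map t₀ u.1 u.2.2))
      = coordSub k J hJ t₀ (⋂ u : {u : T // u ∉ J₀ ∧ t₀ ≤ u}, {ℓ | u.1 ∉ J ℓ}) := by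
    rw [← coordSub_iInf]
    exact iInf_congr fun u =>
      (ker_W_eq k J hJ t₀ u.1 u.2.2).trans (ker_Wmap' k J hJ t₀ u.1 u.2.2)
  rw [h1, h2]; erw [coordSub_inf]
  congr 1
  ext ℓ
  simp only [Set.mem_inter_iff, Set.mem_iInter, Subtype.forall, Set.mem_setOf_eq, SAset]
  constructor
  · rintro ⟨ha, hb⟩
    exact ⟨fun s hs hst => ha s ⟨hs, hst⟩, fun u hu htu => hb u ⟨hu, htu⟩⟩
  · rintro ⟨ha, hb⟩
    exact ⟨fun s hs => ha s hs.1 hs.2, fun u hu => hb u hu.1 hu.2⟩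

theorem persB'_dsum (J₀ : Set T) :
    persB' (dsum fun ℓ => intervalModule k T (J ℓ) (hJ ℓ)) J₀ t₀
      = coordSub k J hJ t₀ (SBset J t₀ J₀) := by
  unfold persB'
  have h1 : (⨆ s : {s : T // s ∉ J₀ ∧ s ≤ t₀},
      LinearMap.range ((dsum fun ℓ => intervalModule k T (J ℓ) (hJ ℓ)).map s.1 t₀ s.2.2))
      = coordSub k J hJ t₀ (⋃ s : {s : T // s ∉ J₀ ∧ s ≤ t₀}, {ℓ | s.1 ∈ J ℓ}) := by
    rw [← coordSub_iSup]
    exact iSup_congr fun s =>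
      (range_W_eq k J hJ s.1 t₀ s.2.2).trans (range_Wmap' k J hJ t₀ s.1 s.2.2)
  have h2 : (⨆ u : {u : T // u ∈ J₀ ∧ t₀ ≤ u},
      LinearMap.ker ((dsum fun ℓ => intervalModule k T (J ℓ) (hJ ℓ)).map t₀ u.1 u.2.2))
      = coordSub k J hJ t₀ (⋃ u : {u : T // u ∈ J₀ ∧ t₀ ≤ u}, {ℓ | u.1 ∉ J ℓ}) := by
    rw [← coordSub_iSup]
    exact iSup_congr fun u =>
      (ker_W_eq k J hJ t₀ u.1 u.2.2).trans (ker_Wmap' k J hJ t₀ u.1 u.2.2)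
  rw [h1, h2]; erw [coordSub_sup]
  congr 1
  ext ℓ
  simp only [Set.mem_union, Set.mem_iUnion, Subtype.exists, Set.mem_setOf_eq, SBset]
  constructor
  · rintro (⟨s, ⟨hs1, hs2⟩, hs3⟩ | ⟨u, ⟨hu1, hu2⟩, hu3⟩)
    · exact Or.inl ⟨s, ⟨hs1, hs2⟩, hs3⟩
    · exact Or.inr ⟨u, ⟨hu1, hu2⟩, hu3⟩
  · rintro (⟨s, ⟨hs1, hs2⟩, hs3⟩ | ⟨u, ⟨hu1, hu2⟩, hu3⟩)
    · exact Or.inl ⟨s, ⟨hs1, hs2⟩, hs3⟩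
    · exact Or.inr ⟨u, ⟨hu1, hu2⟩, hu3⟩

theorem fiber_char {J₀ : Set T} (ht₀ : t₀ ∈ J₀) {ℓ : L}
    (h1 : ∀ s, s ∈ J₀ → s ≤ t₀ → s ∈ J ℓ) (h2 : ∀ u, u ∉ J₀ → t₀ ≤ u → u ∉ J ℓ)
    (h3 : ∀ s, s ∉ J₀ → s ≤ t₀ → s ∉ J ℓ) (h4 : ∀ u, u ∈ J₀ → t₀ ≤ u → u ∈ J ℓ) :
    J ℓ = J₀ := by
  ext x
  rcases le_total x t₀ with h | h
  · exact ⟨fun hx => by_contra fun hc => h3 x hc h hx, fun hx => h1 x hx h⟩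
  · exact ⟨fun hx => by_contra fun hc => h2 x hc h hx, fun hx => h4 x hx h⟩

end Computation

section MultDsum

open Submodule

variable (k : Type) [Field k] {T L : Type} [LinearOrder T]
variable (J : L → Set T) (hJ : ∀ ℓ, IsIntervalSet (J ℓ)) (t₀ : T)

theorem multAt_dsum {J₀ : Set T} (ht₀ : t₀ ∈ J₀) :
    multAt (dsum fun ℓ => intervalModule k T (J ℓ) (hJ ℓ)) J₀ t₀
      = Cardinal.mk {ℓ : L // J ℓ = J₀} := by
  classical
  have hA : persA' (dsum fun ℓ => intervalModule k T (J ℓ) (hJ ℓ)) J₀ t₀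
      = coordSub k J hJ t₀ (SAset J t₀ J₀) := persA'_dsum k J hJ t₀ J₀
  have hB : persB' (dsum fun ℓ => intervalModule k T (J ℓ) (hJ ℓ)) J₀ t₀
      = coordSub k J hJ t₀ (SBset J t₀ J₀) := persB'_dsum k J hJ t₀ J₀
  set A := persA' (dsum fun ℓ => intervalModule k T (J ℓ) (hJ ℓ)) J₀ t₀ with hAdef
  set B := persB' (dsum fun ℓ => intervalModule k T (J ℓ) (hJ ℓ)) J₀ t₀ with hBdef
  have htd : ∀ d : {ℓ : L // J ℓ = J₀}, t₀ ∈ J d.1 := fun d => d.2.symm ▸ ht₀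
  let Φ : (Π₀ ℓ, (intervalModule k T (J ℓ) (hJ ℓ)).space t₀) →ₗ[k]
      (Π₀ _ : {ℓ : L // J ℓ = J₀}, k) :=
    { toFun := fun x => DFinsupp.mapRange (fun d f => f ⟨htd d⟩) (fun _ => rfl)
        (DFinsupp.comapDomain (fun d : {ℓ : L // J ℓ = J₀} => d.1)
          Subtype.val_injective x)
      map_add' := fun x y => DFinsupp.ext fun d => by
        simp only [DFinsupp.mapRange_apply, DFinsupp.comapDomain_apply, DFinsupp.add_apply]
        rfl
      map_smul' := fun c x => DFinsupp.ext fun d => by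
        simp only [DFinsupp.mapRange_apply, DFinsupp.comapDomain_apply, DFinsupp.smul_apply,
          RingHom.id_apply]
        rfl }
  have hΦ_apply : ∀ (x : Π₀ ℓ, (intervalModule k T (J ℓ) (hJ ℓ)).space t₀)
      (d : {ℓ : L // J ℓ = J₀}), Φ x d = x d.1 ⟨htd d⟩ := fun x d => rfl
  let Φ' : ↥A →ₗ[k] (Π₀ _ : {ℓ : L // J ℓ = J₀}, k) := Φ.comp A.subtype
  have hSA_mem : ∀ d : {ℓ : L // J ℓ = J₀}, d.1 ∈ SAset J t₀ J₀ := by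
    intro d
    constructor
    · intro s hs _
      rw [d.2]; exact hs
    · intro u hu _
      rw [d.2]; exact hu
  have hSB_not : ∀ d : {ℓ : L // J ℓ = J₀}, d.1 ∉ SBset J t₀ J₀ := by
    rintro d (⟨s, ⟨hs1, _⟩, hs3⟩ | ⟨u, ⟨hu1, _⟩, hu3⟩)
    · exact hs1 (d.2 ▸ hs3)
    · exact hu3 (d.2.symm ▸ hu1)
  have hsurj : Function.Surjective Φ' := by
    intro y
    have hy : y ∈ LinearMap.range Φ' := by
      induction y using DFinsupp.induction with
      | h0 => exact zero_mem _
      | ha d c f _hf _hc ih =>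
        refine add_mem ?_ ih
        have hdA : DFinsupp.single d.1
            ((fun _ => c) : (intervalModule k T (J d.1) (hJ d.1)).space t₀) ∈ A := by
          rw [hA]
          exact single_mem_coordSub k J hJ t₀ (hSA_mem d) _
        refine ⟨⟨_, hdA⟩, ?_⟩
        refine DFinsupp.ext fun d' => ?_
        have h1 : Φ' ⟨_, hdA⟩ d' = (DFinsupp.single d.1
            ((fun _ => c) : (intervalModule k T (J d.1) (hJ d.1)).space t₀) :
              Π₀ ℓ, (intervalModule k T (J ℓ) (hJ ℓ)).space t₀) d'.1
              ⟨htd d'⟩ := hΦ_apply _ d'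
        rw [h1]
        by_cases hdd : d' = d
        · subst hdd
          erw [DFinsupp.single_eq_same, DFinsupp.single_eq_same]
        · erw [DFinsupp.single_eq_of_ne fun hh => hdd (Subtype.ext hh),
            DFinsupp.single_eq_of_ne hdd]
          rfl
    obtain ⟨x, hx⟩ := hy
    exact ⟨x, hx⟩
  have main : ∀ y : Π₀ ℓ, (intervalModule k T (J ℓ) (hJ ℓ)).space t₀, y ∈ A →
      (Φ y = 0 ↔ y ∈ B) := by
    intro y hyA
    rw [hA] at hyA; erw [mem_coordSub] at hyA
    rw [hB]; erw [mem_coordSub]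
    constructor
    · intro h0 ℓ hℓ
      by_cases ht : t₀ ∈ J ℓ
      · by_cases hSAm : ℓ ∈ SAset J t₀ J₀
        · have hℓ' : ℓ ∉ SBset J t₀ J₀ := hℓ
          simp only [SBset, Set.mem_setOf_eq, not_or, not_exists, not_and] at hℓ'
          obtain ⟨hn1, hn2⟩ := hℓ'
          have h3 : ∀ s, s ∉ J₀ → s ≤ t₀ → s ∉ J ℓ := fun s hs hst => hn1 s ⟨hs, hst⟩
          have h4 : ∀ u, u ∈ J₀ → t₀ ≤ u → u ∈ J ℓ := fun u hu htu =>
            not_not.mp fun hc => (hn2 u ⟨hu, htu⟩) hc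
          have hJl : J ℓ = J₀ := fiber_char J t₀ ht₀ hSAm.1 hSAm.2 h3 h4
          have h5 := congrFun (congrArg DFunLike.coe h0) (⟨ℓ, hJl⟩ : {ℓ : L // J ℓ = J₀})
          rw [hΦ_apply] at h5
          exact ispace_ext k J hJ t₀ ht (h5.trans rfl)
        · exact hyA ℓ hSAm
      · exact ispace_zero k J hJ t₀ ht _
    · intro hyB
      refine DFinsupp.ext fun d => ?_
      rw [hΦ_apply, hyB d.1 (hSB_not d)]
      rfl
  have hker : LinearMap.ker Φ' = Submodule.comap A.subtype B := by
    ext x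
    simp only [LinearMap.mem_ker, Submodule.mem_comap, Submodule.coe_subtype]
    exact main x.1 x.2
  have e1 : (↥A ⧸ Submodule.comap A.subtype B) ≃ₗ[k]
      (Π₀ _ : {ℓ : L // J ℓ = J₀}, k) :=
    (Submodule.quotEquivOfEq _ _ hker.symm).trans
      (LinearMap.quotKerEquivOfSurjective Φ' hsurj)
  show Module.rank k (↥A ⧸ Submodule.comap A.subtype B) = _
  rw [e1.rank_eq, ← (finsuppLequivDFinsupp (ι := {ℓ : L // J ℓ = J₀}) (M := k)
    (R := k)).rank_eq, rank_finsupp_self']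

end MultDsum

theorem stmt0 {k : Type} [Field k] (T : Set ℝ) (V : PersMod k ↥T)
    {L M : Type} (J : L → Set ↥T) (K : M → Set ↥T)
    (hJ : ∀ ℓ, IsIntervalSet (J ℓ)) (hK : ∀ m, IsIntervalSet (K m))
    (hVJ : PersIso V (dsum fun ℓ => intervalModule k ↥T (J ℓ) (hJ ℓ)))
    (hVK : PersIso V (dsum fun m => intervalModule k ↥T (K m) (hK m))) :
    ∃ σ : L ≃ M, ∀ ℓ, J ℓ = K (σ ℓ) := by
  have key : ∀ J₀ : Set ↥T, Nonempty ({ℓ // J ℓ = J₀} ≃ {m // K m = J₀}) := by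
    intro J₀
    by_cases hne : J₀.Nonempty
    · obtain ⟨t₀, ht₀⟩ := hne
      have h1 := multAt_congr hVJ J₀ t₀
      have h2 := multAt_congr hVK J₀ t₀
      have h3 := multAt_dsum k J hJ t₀ ht₀
      have h4 := multAt_dsum k K hK t₀ ht₀
      exact Cardinal.eq.mp (by rw [← h3, ← h1, h2, h4])
    · have e1 : IsEmpty {ℓ // J ℓ = J₀} := ⟨fun p => hne (p.2 ▸ (hJ p.1).1)⟩
      have e2 : IsEmpty {m // K m = J₀} := ⟨fun p => hne (p.2 ▸ (hK p.1).1)⟩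
      exact ⟨Equiv.equivOfIsEmpty _ _⟩
  let f : ∀ J₀ : Set ↥T, {ℓ // J ℓ = J₀} ≃ {m // K m = J₀} := fun J₀ => (key J₀).some
  exact ⟨Equiv.ofFiberEquiv f, fun ℓ => (Equiv.ofFiberEquiv_map f ℓ).symm⟩
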